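/- Let $f_N : [0,\infty) \to \mathbb{R}$ be a sequence of functions that is uniformly bounded and equicontinuous, and suppose that for every $\lambda > 0$ the limit $\lim_{N\to\infty} \int_0^\infty e^{-\lambda t} f_N(t)\,dt$ exists. Then there exists a function $f_\infty : [0,\infty) \to \mathbb{R}$ such that $f_N$ converges to $f_\infty$ uniformly on every compact subset of $[0,\infty)$, and moreover $\lim_{N\to\infty} \int_0^\infty e^{-\lambda t} f_N(t)\,dt = \int_0^\infty e^{-\lambda t} f_\infty(t)\,dt$ for every $\lambda > 0$. -/

import Mathlib

open MeasureTheory Filter Real Topology Set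

lemma extract (f : ℕ → ℝ → ℝ) (M : ℝ)
    (hbM : ∀ N t, 0 ≤ t → |f N t| ≤ M)
    (hequi : ∀ t : ℝ, 0 ≤ t → ∀ ε : ℝ, 0 < ε → ∃ δ : ℝ, 0 < δ ∧ ∀ N, ∀ s : ℝ, 0 ≤ s →
      |s - t| < δ → |f N s - f N t| < ε)
    (ns : ℕ → ℕ) :
    ∃ ms : ℕ → ℕ, StrictMono ms ∧ ∃ g : ℝ → ℝ, ContinuousOn g (Set.Ici 0) ∧
      (∀ t, 0 ≤ t → |g t| ≤ M) ∧
      ∀ t, 0 ≤ t → Tendsto (fun k => f (ns (ms k)) t) atTop (𝓝 (g t)) := by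
  classical
  set S := {q : ℚ // 0 ≤ (q : ℝ)}
  have : Countable S := by infer_instance
  set F : ℕ → (S → ℝ) := fun k q => f (ns k) (q : ℝ) with hF
  have hC : IsCompact (Set.univ.pi (fun _ : S => Set.Icc (-M) M)) :=
    isCompact_univ_pi fun _ => isCompact_Icc
  have hmem : ∀ k, F k ∈ Set.univ.pi (fun _ : S => Set.Icc (-M) M) := by
    intro k q _
    exact abs_le.mp (hbM (ns k) q q.2)
  obtain ⟨a, -, ms, hms, hconv⟩ := hC.tendsto_subseq hmem
  have hcoord : ∀ q : S, Tendsto (fun k => f (ns (ms k)) (q : ℝ)) atTop (𝓝 (a q)) := by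
    intro q
    have := tendsto_pi_nhds.mp hconv q
    simpa [hF, Function.comp] using this
  -- Cauchy at every t ≥ 0
  have hcauchy : ∀ t : ℝ, 0 ≤ t → CauchySeq (fun k => f (ns (ms k)) t) := by
    intro t ht
    rw [Metric.cauchySeq_iff]
    intro ε hε
    obtain ⟨δ, hδ, hδ'⟩ := hequi t ht (ε/3) (by linarith)
    obtain ⟨q, hq1, hq2⟩ := exists_rat_btwn (show t < t + δ by linarith)
    have hq0 : (0:ℝ) ≤ (q:ℝ) := le_of_lt (lt_of_le_of_lt ht hq1)
    have hqd : |(q:ℝ) - t| < δ := by rw [abs_of_nonneg (by linarith)]; linarith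
    have hqc : CauchySeq (fun k => f (ns (ms k)) (q:ℝ)) := (hcoord ⟨q, hq0⟩).cauchySeq
    rw [Metric.cauchySeq_iff] at hqc
    obtain ⟨K, hK⟩ := hqc (ε/3) (by linarith)
    refine ⟨K, fun m hm n hn => ?_⟩
    have h1 := hδ' (ns (ms m)) q hq0 hqd
    have h2 := hδ' (ns (ms n)) q hq0 hqd
    have h3 := hK m hm n hn
    rw [Real.dist_eq] at h3 ⊢
    have : f (ns (ms m)) t - f (ns (ms n)) t =
        -(f (ns (ms m)) q - f (ns (ms m)) t) + (f (ns (ms m)) q - f (ns (ms n)) q)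
        + (f (ns (ms n)) q - f (ns (ms n)) t) := by ring
    calc |f (ns (ms m)) t - f (ns (ms n)) t|
        ≤ |f (ns (ms m)) q - f (ns (ms m)) t| + |f (ns (ms m)) q - f (ns (ms n)) q|
          + |f (ns (ms n)) q - f (ns (ms n)) t| := by
          rw [this]
          refine (abs_add_le _ _).trans (add_le_add_left ((abs_add_le _ _).trans (add_le_add_left (le_of_eq (abs_neg _)) _)) _)
      _ < ε := by linarith
  set g : ℝ → ℝ := fun t => limUnder atTop (fun k => f (ns (ms k)) t) with hg
  have hgt : ∀ t, 0 ≤ t → Tendsto (fun k => f (ns (ms k)) t) atTop (𝓝 (g t)) := by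
    intro t ht
    exact (hcauchy t ht).tendsto_limUnder
  have hgb : ∀ t, 0 ≤ t → |g t| ≤ M := by
    intro t ht
    exact le_of_tendsto ((hgt t ht).abs) (Eventually.of_forall fun k => hbM _ _ ht)
  have hgequi : ∀ t : ℝ, 0 ≤ t → ∀ ε : ℝ, 0 < ε → ∃ δ : ℝ, 0 < δ ∧ ∀ s : ℝ, 0 ≤ s →
      |s - t| < δ → |g s - g t| ≤ ε := by
    intro t ht ε hε
    obtain ⟨δ, hδ, hδ'⟩ := hequi t ht ε hε
    refine ⟨δ, hδ, fun s hs hst => ?_⟩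
    have : Tendsto (fun k => |f (ns (ms k)) s - f (ns (ms k)) t|) atTop (𝓝 |g s - g t|) :=
      ((hgt s hs).sub (hgt t ht)).abs
    exact le_of_tendsto this (Eventually.of_forall fun k => le_of_lt (hδ' _ s hs hst))
  refine ⟨ms, hms, g, ?_, hgb, hgt⟩
  intro t ht
  rw [Metric.continuousWithinAt_iff]
  intro ε hε
  obtain ⟨δ, hδ, hδ'⟩ := hgequi t ht (ε/2) (by linarith)
  refine ⟨δ, hδ, fun s hs hst => ?_⟩
  rw [Real.dist_eq] at hst ⊢
  exact lt_of_le_of_lt (hδ' s hs hst) (by linarith)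

lemma laplace_tendsto (u : ℕ → ℝ → ℝ) (g : ℝ → ℝ) (M l : ℝ) (hl : 0 < l)
    (hmeas : ∀ k, ContinuousOn (u k) (Set.Ici 0))
    (hb : ∀ k t, 0 ≤ t → |u k t| ≤ M)
    (hptw : ∀ t : ℝ, 0 ≤ t → Tendsto (fun k => u k t) atTop (𝓝 (g t))) :
    Tendsto (fun k => ∫ t in Set.Ioi (0:ℝ), Real.exp (-l * t) * u k t) atTop
      (𝓝 (∫ t in Set.Ioi (0:ℝ), Real.exp (-l * t) * g t)) := by
  refine tendsto_integral_of_dominated_convergence (fun t => M * Real.exp (-l * t)) ?_ ?_ ?_ ?_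
  · intro k
    refine ContinuousOn.aestronglyMeasurable ?_ measurableSet_Ioi
    exact (Real.continuous_exp.comp (continuous_const.mul continuous_id)).continuousOn.mul
      ((hmeas k).mono Ioi_subset_Ici_self)
  · exact (exp_neg_integrableOn_Ioi 0 hl).const_mul M
  · intro k
    filter_upwards [ae_restrict_mem measurableSet_Ioi] with t ht
    have ht' : (0:ℝ) ≤ t := le_of_lt ht
    rw [Real.norm_eq_abs, abs_mul, abs_of_pos (Real.exp_pos _)]
    calc Real.exp (-l * t) * |u k t| ≤ Real.exp (-l * t) * M :=
          mul_le_mul_of_nonneg_left (hb k t ht') (le_of_lt (Real.exp_pos _))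
      _ = M * Real.exp (-l * t) := mul_comm _ _
  · filter_upwards [ae_restrict_mem measurableSet_Ioi] with t ht
    exact (hptw t (le_of_lt ht)).const_mul _

lemma poly_approx (u : ℝ → ℝ) (hu : ContinuousOn u (Set.Icc 0 1)) {ε : ℝ} (hε : 0 < ε) :
    ∃ q : Polynomial ℝ, ∀ x ∈ Set.Icc (0:ℝ) 1, |u x - q.eval x| ≤ ε := by
  set U : C(Set.Icc (0:ℝ) 1, ℝ) := ⟨(Set.Icc (0:ℝ) 1).restrict u, hu.restrict⟩ with hU
  have hmem : U ∈ closure (polynomialFunctions (Set.Icc (0:ℝ) 1) : Set C(Set.Icc (0:ℝ) 1, ℝ)) := by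
    rw [← Subalgebra.topologicalClosure_coe, polynomialFunctions_closure_eq_top 0 1]
    trivial
  rw [Metric.mem_closure_iff] at hmem
  obtain ⟨b, hb, hdist⟩ := hmem ε hε
  rw [polynomialFunctions_coe] at hb
  obtain ⟨q, rfl⟩ := hb
  refine ⟨q, fun x hx => ?_⟩
  have := (ContinuousMap.dist_le hε.le).mp hdist.le ⟨x, hx⟩
  rw [Real.dist_eq] at this
  simpa [hU, Polynomial.toContinuousMapOnAlgHom, Set.restrict] using this

lemma moments_zero (u : ℝ → ℝ) (hu : ContinuousOn u (Set.Icc 0 1))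
    (h : ∀ n : ℕ, ∫ x in Set.Icc (0:ℝ) 1, x ^ n * u x = 0) :
    ∀ x ∈ Set.Icc (0:ℝ) 1, u x = 0 := by
  have hui : IntegrableOn u (Set.Icc 0 1) := hu.integrableOn_compact isCompact_Icc
  have hterm : ∀ n : ℕ, IntegrableOn (fun x => x ^ n * u x) (Set.Icc (0:ℝ) 1) :=
    fun n => ((continuous_pow n).continuousOn.mul hu).integrableOn_compact isCompact_Icc
  -- polynomials integrate to zero against u
  have hpoly : ∀ q : Polynomial ℝ, ∫ x in Set.Icc (0:ℝ) 1, q.eval x * u x = 0 := by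
    intro q
    have : ∀ x : ℝ, q.eval x * u x =
        ∑ i ∈ Finset.range (q.natDegree + 1), q.coeff i * (x ^ i * u x) := by
      intro x
      rw [Polynomial.eval_eq_sum_range, Finset.sum_mul]
      exact Finset.sum_congr rfl fun i _ => by ring
    simp_rw [this]
    rw [integral_finset_sum]
    · refine Finset.sum_eq_zero fun i _ => ?_
      rw [integral_const_mul, h i, mul_zero]
    · exact fun i _ => ((hterm i).const_mul _)
  -- bound on u
  obtain ⟨B, hB⟩ := isCompact_Icc.exists_bound_of_continuousOn hu
  have hB0 : 0 ≤ B := le_trans (norm_nonneg _) (hB 0 (by constructor <;> norm_num))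
  -- ∫ u² = 0
  have husq : IntegrableOn (fun x => u x * u x) (Set.Icc (0:ℝ) 1) :=
    (hu.mul hu).integrableOn_compact isCompact_Icc
  have hsq : ∫ x in Set.Icc (0:ℝ) 1, u x * u x = 0 := by
    have key : ∀ ε : ℝ, 0 < ε → |∫ x in Set.Icc (0:ℝ) 1, u x * u x| ≤ ε * (B + 1) := by
      intro ε hε
      obtain ⟨q, hq⟩ := poly_approx u hu hε
      have hqi : IntegrableOn (fun x => q.eval x * u x) (Set.Icc (0:ℝ) 1) :=
        (q.continuous_aeval.continuousOn.mul hu).integrableOn_compact isCompact_Icc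
      have hsub : (∫ x in Set.Icc (0:ℝ) 1, u x * u x) =
          ∫ x in Set.Icc (0:ℝ) 1, (u x - q.eval x) * u x := by
        rw [show (fun x => (u x - q.eval x) * u x) = fun x => u x * u x - q.eval x * u x by
          funext x; ring, integral_sub husq hqi, hpoly q, sub_zero]
      rw [hsub]
      have hle : ∀ x ∈ Set.Icc (0:ℝ) 1, ‖(u x - q.eval x) * u x‖ ≤ ε * (B + 1) := by
        intro x hx
        rw [Real.norm_eq_abs, abs_mul]
        have h1 := hq x hx
        have h2 : |u x| ≤ B + 1 := le_trans (hB x hx) (by linarith)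
        exact mul_le_mul h1 h2 (abs_nonneg _) hε.le
      have hfm : AEStronglyMeasurable (fun x => (u x - q.eval x) * u x)
          (volume.restrict (Set.Icc (0:ℝ) 1)) :=
        (((hu.sub q.continuous_aeval.continuousOn).mul hu).aestronglyMeasurable measurableSet_Icc)
      have := norm_setIntegral_le_of_norm_le_const
        (by rw [Real.volume_Icc]; exact ENNReal.ofReal_lt_top) hle
      rw [Real.norm_eq_abs] at this
      refine this.trans ?_
      rw [Real.volume_real_Icc]
      simp
    have hall : ∀ c : ℝ, 0 < c → |∫ x in Set.Icc (0:ℝ) 1, u x * u x| ≤ c := by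
      intro c hc
      have := key (c / (B + 1)) (by positivity)
      rwa [div_mul_cancel₀ _ (by linarith : B + (1:ℝ) ≠ 0)] at this
    by_contra hne
    have habs : 0 < |∫ x in Set.Icc (0:ℝ) 1, u x * u x| := abs_pos.mpr hne
    have := hall (|∫ x in Set.Icc (0:ℝ) 1, u x * u x| / 2) (by linarith)
    linarith
  -- a.e. zero
  have hae : (fun x => u x * u x) =ᵐ[volume.restrict (Set.Icc (0:ℝ) 1)] 0 := by
    rw [← integral_eq_zero_iff_of_nonneg_ae]
    · exact hsq
    · exact Eventually.of_forall fun x => mul_self_nonneg _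
    · exact husq
  -- pointwise
  intro x hx
  by_contra hne
  obtain ⟨δ, hδ, hδ'⟩ := Metric.continuousWithinAt_iff.mp (hu x hx) |u x| (abs_pos.mpr hne)
  set a := max 0 (x - δ/2) with ha
  set b := min 1 (x + δ/2) with hb'
  have hab : a < b := by
    show max 0 (x - δ/2) < min 1 (x + δ/2)
    rcases lt_or_eq_of_le hx.1 with h0 | h0
    · exact lt_of_lt_of_le (max_lt h0 (by linarith)) (le_min hx.2 (by linarith))
    · calc max 0 (x - δ/2) = 0 := max_eq_left (by linarith)
        _ < min 1 (x + δ/2) := lt_min (by norm_num) (by linarith)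
  have hsubset : Set.Ioo a b ⊆ {y | ¬ (u y * u y = 0)} := by
    intro y hy
    have hy1 : y ∈ Set.Icc (0:ℝ) 1 := ⟨le_of_lt (lt_of_le_of_lt (le_max_left _ _) hy.1),
      le_of_lt (lt_of_lt_of_le hy.2 (min_le_left _ _))⟩
    have hyd : dist y x < δ := by
      rw [Real.dist_eq, abs_lt]
      constructor
      · have := lt_of_le_of_lt (le_max_right _ _) hy.1; linarith
      · have := lt_of_lt_of_le hy.2 (min_le_right _ _); linarith
    have := hδ' hy1 hyd
    rw [Real.dist_eq] at this
    intro hzero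
    have huy : u y = 0 := by nlinarith [mul_self_nonneg (u y)]
    rw [huy, zero_sub, abs_neg] at this
    exact lt_irrefl _ this
  have hmeas0 : volume.restrict (Set.Icc (0:ℝ) 1) {y | ¬ (u y * u y = 0)} = 0 := by
    have := hae
    rw [EventuallyEq, ae_iff] at this
    simpa using this
  have hpos : 0 < volume.restrict (Set.Icc (0:ℝ) 1) (Set.Ioo a b) := by
    rw [Measure.restrict_apply measurableSet_Ioo]
    have : Set.Ioo a b ∩ Set.Icc 0 1 = Set.Ioo a b := by
      refine Set.inter_eq_left.mpr fun y hy => ⟨le_of_lt (lt_of_le_of_lt (le_max_left _ _) hy.1),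
        le_of_lt (lt_of_lt_of_le hy.2 (min_le_left _ _))⟩
    rw [this, Real.volume_Ioo]
    exact ENNReal.ofReal_pos.mpr (by linarith)
  exact absurd (le_trans (measure_mono hsubset) (le_of_eq hmeas0)) (not_le.mpr hpos)

lemma int_aux (w : ℝ → ℝ) (hw : ContinuousOn w (Set.Ici 0)) (Mw l : ℝ) (hl : 0 < l)
    (hb : ∀ t, 0 ≤ t → |w t| ≤ Mw) :
    IntegrableOn (fun t => Real.exp (-l * t) * w t) (Set.Ioi 0) := by
  have hm : AEStronglyMeasurable (fun t => Real.exp (-l * t) * w t)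
      (volume.restrict (Set.Ioi 0)) :=
    ((Real.continuous_exp.comp (continuous_const.mul continuous_id)).continuousOn.mul
      (hw.mono Ioi_subset_Ici_self)).aestronglyMeasurable measurableSet_Ioi
  refine Integrable.mono ((exp_neg_integrableOn_Ioi 0 hl).const_mul Mw) hm ?_
  filter_upwards [ae_restrict_mem measurableSet_Ioi] with t ht
  have ht' : (0:ℝ) ≤ t := le_of_lt ht
  rw [Real.norm_eq_abs, Real.norm_eq_abs, abs_mul, abs_mul, abs_of_pos (Real.exp_pos _)]
  calc Real.exp (-l*t) * |w t| ≤ Real.exp (-l*t) * Mw :=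
        mul_le_mul_of_nonneg_left (hb t ht') (Real.exp_pos _).le
    _ ≤ |Mw| * Real.exp (-l*t) := by
        rw [mul_comm]
        exact mul_le_mul_of_nonneg_right (le_abs_self _) (Real.exp_pos _).le

lemma laplace_inj (g h : ℝ → ℝ)
    (hgc : ContinuousOn g (Set.Ici 0)) (hhc : ContinuousOn h (Set.Ici 0))
    (Mg Mh : ℝ)
    (hgb : ∀ t, 0 ≤ t → |g t| ≤ Mg) (hhb : ∀ t, 0 ≤ t → |h t| ≤ Mh)
    (heq : ∀ l : ℝ, 0 < l → (∫ t in Set.Ioi (0:ℝ), Real.exp (-l * t) * g t)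
      = ∫ t in Set.Ioi (0:ℝ), Real.exp (-l * t) * h t) :
    ∀ t, 0 ≤ t → g t = h t := by
  set d : ℝ → ℝ := fun t => g t - h t with hd
  have hdc : ContinuousOn d (Set.Ici 0) := hgc.sub hhc
  have hdb : ∀ t, 0 ≤ t → |d t| ≤ Mg + Mh := fun t ht =>
    (abs_sub _ _).trans (add_le_add (hgb t ht) (hhb t ht))
  have hlap : ∀ l : ℝ, 0 < l → (∫ t in Set.Ioi (0:ℝ), Real.exp (-l * t) * d t) = 0 := by
    intro l hl
    have : (fun t => Real.exp (-l * t) * d t)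
        = fun t => Real.exp (-l * t) * g t - Real.exp (-l * t) * h t := by
      funext t; simp [hd]; ring
    rw [this, integral_sub (int_aux g hgc Mg l hl hgb) (int_aux h hhc Mh l hl hhb),
      heq l hl, sub_self]
  set u : ℝ → ℝ := fun x => x * d (-Real.log x) with hu
  have humaps : ∀ x ∈ Set.Icc (0:ℝ) 1, 0 ≤ -Real.log x := by
    intro x hx
    simp only [Left.nonneg_neg_iff]
    rcases eq_or_lt_of_le hx.1 with h0 | h0
    · rw [← h0, Real.log_zero]
    · exact Real.log_nonpos hx.1 hx.2
  have huc : ContinuousOn u (Set.Icc 0 1) := by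
    intro x hx
    rcases eq_or_lt_of_le hx.1 with h0 | h0
    · -- x = 0 : squeeze
      rw [← h0]
      have hu0 : u 0 = 0 := by simp [hu]
      unfold ContinuousWithinAt
      rw [hu0]
      apply squeeze_zero_norm' (a := fun x => (Mg + Mh) * x)
      · filter_upwards [self_mem_nhdsWithin] with y hy
        rw [Real.norm_eq_abs, hu, abs_mul, abs_of_nonneg hy.1]
        exact mul_le_mul_of_nonneg_left (hdb _ (humaps y hy)) hy.1 |>.trans
          (le_of_eq (mul_comm _ _))
      · have : Tendsto (fun x : ℝ => (Mg + Mh) * x) (𝓝 0) (𝓝 0) := by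
          have : Continuous (fun x : ℝ => (Mg + Mh) * x) := continuous_const.mul continuous_id
          simpa using this.tendsto 0
        exact this.mono_left nhdsWithin_le_nhds
    · have hlog : ContinuousWithinAt (fun y => -Real.log y) (Set.Icc (0:ℝ) 1) x :=
        ((Real.continuousAt_log h0.ne').neg).continuousWithinAt
      have hcomp : ContinuousWithinAt (fun y => d (-Real.log y)) (Set.Icc (0:ℝ) 1) x :=
        ContinuousWithinAt.comp (t := Set.Ici 0) (g := d) (f := fun y => -Real.log y)
          (hdc (-Real.log x) (humaps x hx)) hlog humaps
      exact continuousWithinAt_id.mul hcomp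
  -- moments of u vanish
  have himg : (fun t : ℝ => Real.exp (-t)) '' (Set.Ioi 0) = Set.Ioo 0 1 := by
    ext y
    constructor
    · rintro ⟨t, ht, rfl⟩
      exact ⟨Real.exp_pos _, Real.exp_lt_one_iff.mpr (neg_lt_zero.mpr ht)⟩
    · rintro ⟨hy0, hy1⟩
      refine ⟨-Real.log y, ?_, ?_⟩
      · exact Set.mem_Ioi.mpr (by linarith [Real.log_neg hy0 hy1])
      · show Real.exp (-(-Real.log y)) = y
        rw [neg_neg, Real.exp_log hy0]
  have hderiv : ∀ x ∈ Set.Ioi (0:ℝ),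
      HasDerivWithinAt (fun t => Real.exp (-t)) (-Real.exp (-x)) (Set.Ioi 0) x := by
    intro x _
    have h1 : HasDerivAt (fun t : ℝ => Real.exp (-t)) (Real.exp (-x) * (-1)) x :=
      (Real.hasDerivAt_exp (-x)).comp x (hasDerivAt_neg x)
    simpa [mul_neg_one] using h1.hasDerivWithinAt
  have hinj : Set.InjOn (fun t : ℝ => Real.exp (-t)) (Set.Ioi 0) := by
    intro a _ b _ hab
    exact neg_injective (Real.exp_injective hab)
  have hmom : ∀ n : ℕ, ∫ x in Set.Icc (0:ℝ) 1, x ^ n * u x = 0 := by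
    intro n
    rw [MeasureTheory.integral_Icc_eq_integral_Ioo, ← himg,
      integral_image_eq_integral_abs_deriv_smul measurableSet_Ioi hderiv hinj]
    have hpt : ∀ t : ℝ, |(-Real.exp (-t))| • ((Real.exp (-t)) ^ n * u (Real.exp (-t)))
        = Real.exp (-((n:ℝ)+2) * t) * d t := by
      intro t
      rw [abs_neg, abs_of_pos (Real.exp_pos _), smul_eq_mul]
      have h1 : u (Real.exp (-t)) = Real.exp (-t) * d t := by
        rw [hu]; simp [Real.log_exp]
      rw [h1]
      have h2 : Real.exp (-t) * (Real.exp (-t) ^ n * (Real.exp (-t) * d t))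
          = Real.exp (-t) * Real.exp (-t) ^ n * Real.exp (-t) * d t := by ring
      rw [h2]
      congr 1
      rw [← Real.exp_nat_mul, ← Real.exp_add, ← Real.exp_add]
      congr 1
      ring
    calc (∫ t in Set.Ioi (0:ℝ), |(-Real.exp (-t))| • ((Real.exp (-t)) ^ n * u (Real.exp (-t))))
        = ∫ t in Set.Ioi (0:ℝ), Real.exp (-((n:ℝ)+2) * t) * d t :=
          integral_congr_ae (Eventually.of_forall fun t => hpt t)
      _ = 0 := hlap _ (by positivity)
  have huz := moments_zero u huc hmom
  intro t ht
  have hx : Real.exp (-t) ∈ Set.Icc (0:ℝ) 1 :=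
    ⟨(Real.exp_pos _).le, Real.exp_le_one_iff.mpr (by linarith)⟩
  have h0 := huz _ hx
  rw [hu] at h0
  simp only [Real.log_exp, neg_neg] at h0
  rcases mul_eq_zero.mp h0 with h1 | h1
  · exact absurd h1 (Real.exp_ne_zero _)
  · have : g t - h t = 0 := h1
    linarith

/-- Arzelà–Ascoli + Laplace transform convergence. -/
theorem stmt0
    (f : ℕ → ℝ → ℝ)
    (hcont : ∀ N, ContinuousOn (f N) (Set.Ici 0))
    (hbdd : ∃ M : ℝ, ∀ N, ∀ t : ℝ, 0 ≤ t → |f N t| ≤ M)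
    (hequi : ∀ t : ℝ, 0 ≤ t → ∀ ε : ℝ, 0 < ε → ∃ δ : ℝ, 0 < δ ∧ ∀ N, ∀ s : ℝ, 0 ≤ s →
      |s - t| < δ → |f N s - f N t| < ε)
    (hconv : ∀ l : ℝ, 0 < l → ∃ L : ℝ,
      Tendsto (fun N => ∫ t in Set.Ioi (0:ℝ), Real.exp (-l * t) * f N t) atTop (𝓝 L)) :
    ∃ finf : ℝ → ℝ,
      (∀ K : Set ℝ, K ⊆ Set.Ici 0 → IsCompact K →
        TendstoUniformlyOn (fun N => f N) finf atTop K) ∧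
      (∀ l : ℝ, 0 < l →
        Tendsto (fun N => ∫ t in Set.Ioi (0:ℝ), Real.exp (-l * t) * f N t) atTop
          (𝓝 (∫ t in Set.Ioi (0:ℝ), Real.exp (-l * t) * finf t))) := by
  classical
  obtain ⟨M, hM⟩ := hbdd
  choose L hL using hconv
  obtain ⟨ms0, hms0, finf, hfc, hfb, hfpt⟩ := extract f M hM hequi id
  -- the Laplace transform of finf is the limit L
  have key : ∀ l : ℝ, ∀ hl : 0 < l,
      (∫ t in Set.Ioi (0:ℝ), Real.exp (-l * t) * finf t) = L l hl := by
    intro l hl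
    have h1 := laplace_tendsto (fun k => f (id (ms0 k))) finf M l hl
      (fun k => hcont _) (fun k t ht => hM _ t ht) hfpt
    have h2 : Tendsto (fun k => ∫ t in Set.Ioi (0:ℝ), Real.exp (-l * t) * f (id (ms0 k)) t)
        atTop (𝓝 (L l hl)) := (hL l hl).comp hms0.tendsto_atTop
    exact tendsto_nhds_unique h1 h2
  -- pointwise convergence of the full sequence
  have hpt : ∀ t : ℝ, 0 ≤ t → Tendsto (fun N => f N t) atTop (𝓝 (finf t)) := by
    intro t ht
    refine tendsto_of_subseq_tendsto fun ns hns => ?_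
    obtain ⟨ms, hms, g, hgc, hgb, hgpt⟩ := extract f M hM hequi ns
    have hgf : ∀ s, 0 ≤ s → g s = finf s := by
      refine laplace_inj g finf hgc hfc M M hgb hfb ?_
      intro l hl
      have h1 := laplace_tendsto (fun k => f (ns (ms k))) g M l hl
        (fun k => hcont _) (fun k s hs => hM _ s hs) hgpt
      have h2 : Tendsto (fun k => ∫ s in Set.Ioi (0:ℝ), Real.exp (-l * s) * f (ns (ms k)) s)
          atTop (𝓝 (L l hl)) := (hL l hl).comp (hns.comp hms.tendsto_atTop)
      rw [tendsto_nhds_unique h1 h2, key l hl]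
    exact ⟨ms, hgf t ht ▸ hgpt t ht⟩
  refine ⟨finf, ?_, ?_⟩
  · -- uniform convergence on compacts
    intro K hK hKc
    rw [Metric.tendstoUniformlyOn_iff]
    intro ε hε
    have Hd : ∀ x : ℝ, ∃ δ : ℝ, 0 < δ ∧ (0 ≤ x → ∀ N, ∀ s : ℝ, 0 ≤ s → |s - x| < δ →
        |f N s - f N x| < ε/3) := by
      intro x
      by_cases hx : 0 ≤ x
      · obtain ⟨δ, hδ, h'⟩ := hequi x hx (ε/3) (by linarith)
        exact ⟨δ, hδ, fun _ => h'⟩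
      · exact ⟨1, one_pos, fun h => absurd h hx⟩
    choose δf hδf hδf' using Hd
    obtain ⟨T, hTK, hTcov⟩ := hKc.elim_nhds_subcover (fun x => Metric.ball x (δf x))
      (fun x _ => Metric.ball_mem_nhds x (hδf x))
    have hev : ∀ᶠ N in atTop, ∀ x ∈ T, |f N x - finf x| < ε/3 := by
      rw [eventually_all_finset]
      intro x hx
      have hx0 : (0:ℝ) ≤ x := hK (hTK x hx)
      filter_upwards [Metric.tendsto_nhds.mp (hpt x hx0) (ε/3) (by linarith)] with N hN
      rw [← Real.dist_eq]
      exact hN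
    filter_upwards [hev] with N hN x hxK
    have hx0 : (0:ℝ) ≤ x := hK hxK
    obtain ⟨i, hiT, hxi⟩ := Set.mem_iUnion₂.mp (hTcov hxK)
    have hi0 : (0:ℝ) ≤ i := hK (hTK i hiT)
    have hdist : |x - i| < δf i := by rw [← Real.dist_eq]; exact Metric.mem_ball.mp hxi
    have h1 : |f N x - f N i| < ε/3 := hδf' i hi0 N x hx0 hdist
    have h2 : |f N i - finf i| < ε/3 := hN i hiT
    have h3 : |finf x - finf i| ≤ ε/3 :=
      le_of_tendsto (((hpt x hx0).sub (hpt i hi0)).abs)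
        (Eventually.of_forall fun N' => (hδf' i hi0 N' x hx0 hdist).le)
    rw [Real.dist_eq]
    have e1 : finf x - f N x = (finf x - finf i) + (f N i - finf i) * (-1)
        + (f N x - f N i) * (-1) := by ring
    calc |finf x - f N x| ≤ |(finf x - finf i) + (f N i - finf i) * (-1)|
          + |(f N x - f N i) * (-1)| := by rw [e1]; exact abs_add_le _ _
      _ ≤ |finf x - finf i| + |(f N i - finf i) * (-1)| + |(f N x - f N i) * (-1)| :=
          add_le_add_left (abs_add_le _ _) _
      _ = |finf x - finf i| + |f N i - finf i| + |f N x - f N i| := by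
          rw [abs_mul, abs_mul]; simp
      _ < ε := by linarith
  · intro l hl
    exact laplace_tendsto f finf M l hl hcont (fun N t ht => hM N t ht) hpt
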